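/- For any Dyck path λ of size n, the product ∏_{c ∈ Chord(λ)} [l(c)] divides [n]! in ℤ[q], where the chords are given by the parenthesis matching of λ and l(c) is the number of chords weakly nested inside c. -/

import Mathlib

open Polynomial

/-- The `q`-integer `[n] = ∑_{i=0}^{n-1} q^i` in `ℤ[q]`. -/
noncomputable def qIntP (n : ℕ) : Polynomial ℤ := ∑ i ∈ Finset.range n, X ^ i

/-- The `q`-factorial `[n]! = ∏_{i=1}^{n} [i]` in `ℤ[q]`. -/
noncomputable def qFactP (n : ℕ) : Polynomial ℤ := ∏ i ∈ Finset.Icc 1 n, qIntP i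

/-- Height of the lattice path after the first `k` steps of `w`
(`true` = up step `U`, `false` = down step `D`). -/
def prefixHeight (w : List Bool) (k : ℕ) : ℤ :=
  ((w.take k).count true : ℤ) - ((w.take k).count false : ℤ)

/-- `w` is a Dyck word of size `n`: a balanced word of length `2n` in `U,D`
all of whose prefix heights are nonnegative. -/
def IsDyckWord (w : List Bool) (n : ℕ) : Prop :=
  w.length = 2 * n ∧ w.count true = n ∧ ∀ k ≤ w.length, 0 ≤ prefixHeight w k

/-- Positions `i < j` form a chord of `w`: the `U` at position `i` is matched with
the `D` at position `j` in the parenthesis matching, i.e. the heights before step `i`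
and after step `j` agree and the path stays strictly above that level in between. -/
def IsChord (w : List Bool) (i j : ℕ) : Prop :=
  i < j ∧ j < w.length ∧ w.getD i false = true ∧ w.getD j true = false ∧
    prefixHeight w i = prefixHeight w (j + 1) ∧
    ∀ k, i < k → k ≤ j → prefixHeight w i < prefixHeight w k

open scoped Classical in
/-- The set of chords of `w`, given by the matching of parentheses. -/
noncomputable def chords (w : List Bool) : Finset (ℕ × ℕ) :=
  (Finset.range w.length ×ˢ Finset.range w.length).filter fun p => IsChord w p.1 p.2

open scoped Classical in
/-- The length `l(c)` of a chord `c`: the number of chords weakly nested inside `c`,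
i.e. one plus the number of chords strictly nested inside `c`. -/
noncomputable def chordLength (w : List Bool) (c : ℕ × ℕ) : ℕ :=
  ((chords w).filter fun p => c.1 ≤ p.1 ∧ p.2 ≤ c.2).card

namespace DyckAux

lemma ph_zero (w : List Bool) : prefixHeight w 0 = 0 := by simp [prefixHeight]

lemma ph_cons_true (v : List Bool) (k : ℕ) :
    prefixHeight (true :: v) (k+1) = 1 + prefixHeight v k := by
  simp [prefixHeight, List.take_succ_cons, List.count_cons]
  push_cast
  ring

lemma ph_append_left (u v : List Bool) (k : ℕ) (h : k ≤ u.length) :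
    prefixHeight (u ++ v) k = prefixHeight u k := by
  rw [prefixHeight, prefixHeight, List.take_append_of_le_length h]

lemma ph_take_length (u : List Bool) :
    prefixHeight u u.length = (u.count true : ℤ) - (u.count false : ℤ) := by
  rw [prefixHeight, List.take_length]

lemma ph_append_right (u v : List Bool) (k : ℕ) :
    prefixHeight (u ++ v) (u.length + k) = prefixHeight u u.length + prefixHeight v k := by
  unfold prefixHeight
  rw [List.take_append, List.take_length, List.take_of_length_le (Nat.le_add_right u.length k),
    Nat.add_sub_cancel_left, List.count_append, List.count_append]
  push_cast
  ring

lemma ph_step (w : List Bool) (k : ℕ) (h : k < w.length) :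
    prefixHeight w (k+1) = prefixHeight w k + (if w.getD k false = true then 1 else -1) := by
  unfold prefixHeight
  rw [List.take_succ, List.getElem?_eq_getElem h, List.getD_eq_getElem _ _ h]
  cases hb : w[k] <;>
    simp [List.count_append, hb] <;> push_cast <;> ring

lemma ph_last {w : List Bool} {n : ℕ} (hw : IsDyckWord w n) :
    prefixHeight w w.length = 0 := by
  obtain ⟨hl, hc, _⟩ := hw
  have := List.count_true_add_count_false w
  rw [ph_take_length]
  omega

lemma qIntP_add (a b : ℕ) : qIntP (a+b) = qIntP a + X^a * qIntP b := by
  unfold qIntP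
  rw [Finset.sum_range_add, Finset.mul_sum]
  simp [pow_add]

lemma qFactP_zero : qFactP 0 = 1 := by simp [qFactP]

lemma qFactP_succ (n : ℕ) : qFactP (n+1) = qFactP n * qIntP (n+1) := by
  unfold qFactP
  rw [Finset.prod_Icc_succ_top (by omega)]

lemma qFact_mul_dvd : ∀ (a b : ℕ), qFactP a * qFactP b ∣ qFactP (a+b) := by
  suffices H : ∀ n a b, a + b = n → qFactP a * qFactP b ∣ qFactP (a+b) by
    intro a b; exact H (a+b) a b rfl
  intro n
  induction n using Nat.strong_induction_on with
  | _ n ih =>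
    intro a b hab
    match a, b with
    | 0, b => simpa [qFactP_zero] using dvd_refl (qFactP b)
    | a+1, 0 => simpa [qFactP_zero] using dvd_refl (qFactP (a+1))
    | a+1, b+1 =>
      have h1 : qFactP a * qFactP (b+1) ∣ qFactP (a+(b+1)) :=
        ih (a+(b+1)) (by omega) a (b+1) rfl
      have h2 : qFactP (a+1) * qFactP b ∣ qFactP ((a+1)+b) :=
        ih ((a+1)+b) (by omega) (a+1) b rfl
      have key : qFactP (a+1+(b+1)) =
          qIntP (a+1) * qFactP (a+(b+1)) + X^(a+1) * qIntP (b+1) * qFactP ((a+1)+b) := by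
        have e1 : a+1+(b+1) = (a+1+b)+1 := by ring
        rw [e1, qFactP_succ]
        have e2 : (a+1+b)+1 = (a+1)+(b+1) := by ring
        rw [e2, qIntP_add]
        have e3 : a+(b+1) = a+1+b := by ring
        rw [e3]
        ring
      rw [key]
      apply dvd_add
      · have : qFactP (a+1) * qFactP (b+1) = qIntP (a+1) * (qFactP a * qFactP (b+1)) := by
          rw [qFactP_succ]; ring
        rw [this]
        exact mul_dvd_mul_left _ h1
      · have : qFactP (a+1) * qFactP (b+1) ∣ qIntP (b+1) * qFactP ((a+1)+b) := by
          have e : qFactP (a+1) * qFactP (b+1) = qIntP (b+1) * (qFactP (a+1) * qFactP b) := by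
            rw [qFactP_succ b]; ring
          rw [e]
          exact mul_dvd_mul_left _ h2
        calc qFactP (a+1) * qFactP (b+1) ∣ qIntP (b+1) * qFactP ((a+1)+b) := this
          _ ∣ X^(a+1) * qIntP (b+1) * qFactP ((a+1)+b) := ⟨X^(a+1), by ring⟩
      
-- Stage 2: decomposition
lemma ph_single_false : prefixHeight [false] 1 = -1 := by decide

lemma exists_decomp {n : ℕ} {w : List Bool} (hw : IsDyckWord w (n+1)) :
    ∃ (w1 w2 : List Bool) (n1 n2 : ℕ), w = true :: (w1 ++ false :: w2) ∧
      IsDyckWord w1 n1 ∧ IsDyckWord w2 n2 ∧ n = n1 + n2 := by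
  obtain ⟨hlen, hcount, hpos⟩ := hw
  have hlen0 : 0 < w.length := by omega
  have hend : prefixHeight w w.length = 0 := ph_last ⟨hlen, hcount, hpos⟩
  have hex : ∃ k, 0 < k ∧ prefixHeight w k = 0 := ⟨w.length, hlen0, hend⟩
  classical
  obtain ⟨m, ⟨hm0, hmz⟩, hmle, hminraw⟩ :
      ∃ m, (0 < m ∧ prefixHeight w m = 0) ∧ m ≤ w.length ∧
        ∀ k < m, ¬(0 < k ∧ prefixHeight w k = 0) :=
    ⟨Nat.find hex, Nat.find_spec hex, Nat.find_min' hex ⟨hlen0, hend⟩,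
      fun k hk => Nat.find_min hex hk⟩
  have hmin : ∀ k, 0 < k → k < m → 0 < prefixHeight w k := by
    intro k hk hkm
    have h1 := hminraw k hkm
    have h2 := hpos k (le_trans (le_of_lt hkm) hmle)
    push_neg at h1
    rcases lt_or_eq_of_le h2 with h | h
    · exact h
    · exact absurd h.symm (h1 hk)
  have w0 : w.getD 0 false = true := by
    have hs := ph_step w 0 hlen0
    have h1 := hpos 1 hlen0
    rw [ph_zero] at hs
    cases hgd : w.getD 0 false with
    | true => rfl
    | false => rw [hgd] at hs; simp at hs; omega
  have hm2 : 2 ≤ m := by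
    by_contra hcon
    have hm1 : m = 1 := by omega
    have hs := ph_step w 0 hlen0
    rw [ph_zero, w0] at hs
    simp at hs
    rw [hm1] at hmz
    omega
  have hm1lt : m - 1 < w.length := by omega
  have hphm1 : 0 < prefixHeight w (m-1) := hmin (m-1) (by omega) (by omega)
  have hsm : prefixHeight w m = prefixHeight w (m-1) + (if w.getD (m-1) false = true then 1 else -1) := by
    have := ph_step w (m-1) hm1lt
    rwa [show m - 1 + 1 = m from by omega] at this
  have wm : w.getD (m-1) false = false := by
    cases hgd : w.getD (m-1) false with
    | false => rfl
    | true => rw [hgd] at hsm; simp at hsm; omega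
  have hphm1' : prefixHeight w (m-1) = 1 := by
    rw [wm] at hsm; simp at hsm; omega
  obtain ⟨b, t, rfl⟩ : ∃ b t, w = b :: t := by
    cases w with
    | nil => simp at hlen0
    | cons b t => exact ⟨b, t, rfl⟩
  have hb : b = true := by simpa using w0
  subst hb
  have htlen : m - 2 < t.length := by
    simp only [List.length_cons] at hmle
    omega
  set w1 : List Bool := t.take (m-2) with hw1
  set w2 : List Bool := t.drop (m-1) with hw2
  have htm : t[m-2] = false := by
    have he : (true :: t).getD (m-1) false = t.getD (m-2) false := by
      rw [show m - 1 = (m-2) + 1 from by omega, List.getD_cons_succ]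
    rw [he] at wm
    rwa [List.getD_eq_getElem _ _ htlen] at wm
  have hteq : t = w1 ++ false :: w2 := by
    have h1 : t = t.take (m-2) ++ t.drop (m-2) := (List.take_append_drop _ _).symm
    have h2 : t.drop (m-2) = t[m-2] :: t.drop (m-1) := by
      have := List.drop_eq_getElem_cons htlen
      rwa [show m - 2 + 1 = m - 1 from by omega] at this
    rw [htm] at h2
    rw [h2] at h1
    exact h1
  have weq : (true :: t) = true :: (w1 ++ false :: w2) := by rw [← hteq]
  have hw1len : w1.length = m - 2 := by
    rw [hw1, List.length_take]; omega
  have ph1 : ∀ k ≤ w1.length, prefixHeight (true :: t) (k+1) = 1 + prefixHeight w1 k := by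
    intro k hk
    rw [weq, ph_cons_true, ph_append_left _ _ _ hk]
  have hw1bal : prefixHeight w1 w1.length = 0 := by
    have h := ph1 w1.length le_rfl
    rw [show w1.length + 1 = m - 1 from by omega, hphm1'] at h
    omega
  have hu : (true :: t) = (true :: (w1 ++ [false])) ++ w2 := by
    rw [weq]; simp
  have hulen : (true :: (w1 ++ [false])).length = m := by
    simp [hw1len]; omega
  have hu0 : prefixHeight (true :: (w1 ++ [false])) ((true :: (w1 ++ [false])).length) = 0 := by
    rw [List.length_cons, List.length_append, List.length_singleton]
    rw [show w1.length + 1 + 1 = (w1.length + 1) + 1 from rfl, ph_cons_true]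
    rw [ph_append_right w1 [false] 1, hw1bal, ph_single_false]
    ring
  have ph2 : ∀ k, prefixHeight (true :: t) (m + k) = prefixHeight w2 k := by
    intro k
    conv_lhs => rw [hu]
    rw [show m + k = (true :: (w1 ++ [false])).length + k from by rw [hulen]]
    rw [ph_append_right, hu0]
    ring
  refine ⟨w1, w2, w1.count true, w2.count true, weq, ⟨?_, rfl, ?_⟩, ⟨?_, rfl, ?_⟩, ?_⟩
  · -- w1 length
    have hc := List.count_true_add_count_false w1
    have := ph_take_length w1
    rw [hw1bal] at this  -- wrong direction
    omega
  · intro k hk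
    have h := ph1 k hk
    have hph : 0 < prefixHeight (true :: t) (k+1) := hmin (k+1) (by omega) (by omega)
    omega
  · have hbal2 : prefixHeight w2 w2.length = 0 := by
      have h := ph2 w2.length
      have hml : m + w2.length = (true :: t).length := by
        simp only [List.length_cons]
        rw [hw2, List.length_drop]
        omega
      rw [hml, hend] at h
      exact h.symm
    have hc := List.count_true_add_count_false w2
    have := ph_take_length w2
    rw [hbal2] at this
    omega
  · intro k hk
    have h := ph2 k
    have hph := hpos (m + k) (by
      rw [hw2, List.length_drop] at hk
      simp only [List.length_cons]
      omega)
    omega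
  · have : (true :: t).count true = 1 + w1.count true + w2.count true := by
      rw [weq]
      simp [List.count_cons, List.count_append]
      omega
    omega

end DyckAux

namespace DyckAux2
open DyckAux

lemma mem_chords {w : List Bool} {p : ℕ × ℕ} : p ∈ chords w ↔ IsChord w p.1 p.2 := by
  classical
  simp only [chords, Finset.mem_filter, Finset.mem_product, Finset.mem_range]
  constructor
  · intro h; exact h.2
  · intro h; exact ⟨⟨lt_trans h.1 h.2.1, h.2.1⟩, h⟩

section Transfer
variable {w1 w2 : List Bool} {n1 n2 : ℕ}

lemma L_len : (true :: (w1 ++ false :: w2)).length = w1.length + 2 + w2.length := by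
  simp only [List.length_cons, List.length_append]
  omega

lemma ph1 {k : ℕ} (h : k ≤ w1.length) :
    prefixHeight (true :: (w1 ++ false :: w2)) (k+1) = 1 + prefixHeight w1 k := by
  rw [ph_cons_true, ph_append_left _ _ _ h]

lemma ph2 (h1 : IsDyckWord w1 n1) (k : ℕ) :
    prefixHeight (true :: (w1 ++ false :: w2)) (w1.length + 2 + k) = prefixHeight w2 k := by
  have hu : (true :: (w1 ++ false :: w2)) = (true :: (w1 ++ [false])) ++ w2 := by simp
  have hulen : (true :: (w1 ++ [false])).length = w1.length + 2 := by
    simp only [List.length_cons, List.length_append, List.length_singleton, List.length_nil]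
  have hu0 : prefixHeight (true :: (w1 ++ [false])) ((true :: (w1 ++ [false])).length) = 0 := by
    rw [hulen, show w1.length + 2 = (w1.length + 1) + 1 from rfl, ph_cons_true,
      ph_append_right w1 [false] 1, ph_last h1, ph_single_false]
    ring
  rw [hu, show w1.length + 2 + k = (true :: (w1 ++ [false])).length + k from by rw [hulen],
    ph_append_right, hu0]
  ring

lemma phmid (h1 : IsDyckWord w1 n1) {k : ℕ} (hk0 : 0 < k) (hk : k ≤ w1.length + 1) :
    1 ≤ prefixHeight (true :: (w1 ++ false :: w2)) k := by
  obtain ⟨k', rfl⟩ : ∃ k', k = k' + 1 := ⟨k - 1, by omega⟩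
  rw [ph1 (by omega)]
  have := h1.2.2 k' (by omega)
  omega

lemma g0 (d : Bool) : (true :: (w1 ++ false :: w2)).getD 0 d = true := rfl

lemma g1 {i : ℕ} (h : i < w1.length) (d : Bool) :
    (true :: (w1 ++ false :: w2)).getD (i+1) d = w1.getD i d := by
  rw [List.getD_cons_succ, List.getD_append _ _ _ _ h]

lemma g2 (d : Bool) : (true :: (w1 ++ false :: w2)).getD (w1.length + 1) d = false := by
  rw [List.getD_cons_succ, List.getD_append_right _ _ _ _ le_rfl]
  simp

lemma g3 (i : ℕ) (d : Bool) :
    (true :: (w1 ++ false :: w2)).getD (w1.length + 2 + i) d = w2.getD i d := by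
  rw [show w1.length + 2 + i = (w1.length + (1 + i)) + 1 from by ring, List.getD_cons_succ,
    List.getD_append_right _ _ _ _ (by omega)]
  rw [show w1.length + (1 + i) - w1.length = i + 1 from by omega, List.getD_cons_succ]

lemma T1 (h1 : IsDyckWord w1 n1) (h2 : IsDyckWord w2 n2) (j : ℕ) :
    IsChord (true :: (w1 ++ false :: w2)) 0 j ↔ j = w1.length + 1 := by
  constructor
  · rintro ⟨hij, hjlen, _, _, hph, hstrict⟩
    rw [ph_zero] at hph hstrict
    by_contra hne
    rcases lt_or_gt_of_ne hne with h | h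
    · have := phmid (w2 := w2) h1 (show 0 < j + 1 by omega) (show j + 1 ≤ w1.length + 1 by omega)
      omega
    · have hs := hstrict (w1.length + 2) (by omega) (by omega)
      have := ph2 (w2 := w2) h1 0
      rw [ph_zero] at this
      rw [show w1.length + 2 + 0 = w1.length + 2 from by ring] at this
      omega
  · rintro rfl
    refine ⟨by omega, by rw [L_len]; omega, g0 _, g2 _, ?_, ?_⟩
    · rw [ph_zero, show w1.length + 1 + 1 = w1.length + 2 + 0 from by ring, ph2 h1, ph_zero]
    · intro k hk0 hk
      rw [ph_zero]
      have := phmid (w2 := w2) h1 hk0 hk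
      omega
lemma T2f (i j : ℕ) (h : IsChord w1 i j) :
    IsChord (true :: (w1 ++ false :: w2)) (i+1) (j+1) := by
  obtain ⟨hij, hjlen, hgi, hgj, hph, hstrict⟩ := h
  refine ⟨by omega, by rw [L_len]; omega, ?_, ?_, ?_, ?_⟩
  · rw [g1 (lt_trans hij hjlen)]; exact hgi
  · rw [g1 hjlen]; exact hgj
  · rw [ph1 (by omega), show j + 1 + 1 = (j+1) + 1 from rfl, ph1 (by omega), hph]
  · intro k hk0 hk
    obtain ⟨k', rfl⟩ : ∃ k', k = k' + 1 := ⟨k - 1, by omega⟩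
    rw [ph1 (by omega), ph1 (show k' ≤ w1.length by omega)]
    have := hstrict k' (by omega) (by omega)
    omega

lemma T2r (i j : ℕ) (hj : j + 1 ≤ w1.length)
    (h : IsChord (true :: (w1 ++ false :: w2)) (i+1) (j+1)) : IsChord w1 i j := by
  obtain ⟨hij, hjlen, hgi, hgj, hph, hstrict⟩ := h
  refine ⟨by omega, by omega, ?_, ?_, ?_, ?_⟩
  · rw [g1 (show i < w1.length by omega)] at hgi; exact hgi
  · rw [g1 (show j < w1.length by omega)] at hgj; exact hgj
  · rw [ph1 (show i ≤ w1.length by omega), show j + 1 + 1 = (j+1) + 1 from rfl,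
      ph1 (by omega)] at hph
    omega
  · intro k hk0 hk
    have := hstrict (k+1) (by omega) (by omega)
    rw [ph1 (show i ≤ w1.length by omega), ph1 (show k ≤ w1.length by omega)] at this
    omega

lemma T3f (h1 : IsDyckWord w1 n1) (i j : ℕ) (h : IsChord w2 i j) :
    IsChord (true :: (w1 ++ false :: w2)) (w1.length + 2 + i) (w1.length + 2 + j) := by
  obtain ⟨hij, hjlen, hgi, hgj, hph, hstrict⟩ := h
  refine ⟨by omega, by rw [L_len]; omega, ?_, ?_, ?_, ?_⟩
  · rw [g3]; exact hgi
  · rw [g3]; exact hgj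
  · rw [ph2 h1, show w1.length + 2 + j + 1 = w1.length + 2 + (j+1) from by ring, ph2 h1, hph]
  · intro k hk0 hk
    obtain ⟨k', rfl⟩ : ∃ k', k = w1.length + 2 + k' := ⟨k - (w1.length + 2), by omega⟩
    rw [ph2 h1, ph2 h1]
    exact hstrict k' (by omega) (by omega)

lemma T3r (h1 : IsDyckWord w1 n1) (i j : ℕ)
    (h : IsChord (true :: (w1 ++ false :: w2)) (w1.length + 2 + i) (w1.length + 2 + j)) :
    IsChord w2 i j := by
  obtain ⟨hij, hjlen, hgi, hgj, hph, hstrict⟩ := h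
  rw [L_len] at hjlen
  refine ⟨by omega, by omega, ?_, ?_, ?_, ?_⟩
  · rw [g3] at hgi; exact hgi
  · rw [g3] at hgj; exact hgj
  · rw [ph2 h1, show w1.length + 2 + j + 1 = w1.length + 2 + (j+1) from by ring, ph2 h1] at hph
    exact hph
  · intro k hk0 hk
    have := hstrict (w1.length + 2 + k) (by omega) (by omega)
    rw [ph2 h1, ph2 h1] at this
    exact this

lemma T4 (h1 : IsDyckWord w1 n1) (i j : ℕ)
    (h : IsChord (true :: (w1 ++ false :: w2)) i j) :
    i = 0 ∨ (1 ≤ i ∧ j ≤ w1.length) ∨ (w1.length + 2 ≤ i) := by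
  obtain ⟨hij, hjlen, hgi, hgj, hph, hstrict⟩ := h
  by_contra hcon
  push_neg at hcon
  obtain ⟨hi0, hmid, hi2⟩ := hcon
  have hi1 : 1 ≤ i := by omega
  have hja : w1.length + 1 ≤ j := by
    have := hmid hi1; omega
  have hia : i ≤ w1.length + 1 := by omega
  rcases Nat.eq_or_lt_of_le hia with he | hlt
  · rw [he, g2] at hgi
    exact Bool.false_ne_true hgi
  · have hiph : 1 ≤ prefixHeight (true :: (w1 ++ false :: w2)) i := phmid h1 (by omega) (by omega)
    have hz : prefixHeight (true :: (w1 ++ false :: w2)) (w1.length + 2) = 0 := by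
      rw [show w1.length + 2 = w1.length + 2 + 0 from rfl, ph2 h1, ph_zero]
    rcases Nat.eq_or_lt_of_le hja with hje | hjlt
    · rw [← hje, show w1.length + 1 + 1 = w1.length + 2 from rfl, hz] at hph
      omega
    · have := hstrict (w1.length + 2) (by omega) (by omega)
      omega

lemma chords_decomp (h1 : IsDyckWord w1 n1) (h2 : IsDyckWord w2 n2) :
    chords (true :: (w1 ++ false :: w2)) =
      insert (0, w1.length + 1)
        (((chords w1).image fun p => (p.1 + 1, p.2 + 1)) ∪
         ((chords w2).image fun p => (p.1 + (w1.length + 2), p.2 + (w1.length + 2)))) := by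
  classical
  ext ⟨i, j⟩
  simp only [mem_chords, Finset.mem_insert, Finset.mem_union, Finset.mem_image,
    Prod.mk.injEq, Prod.exists]
  constructor
  · intro h
    rcases T4 h1 i j h with h0 | ⟨hi1, hja⟩ | hi2
    · subst h0
      exact Or.inl ⟨rfl, (T1 h1 h2 j).mp h⟩
    · have hij : i < j := h.1
      obtain ⟨i', rfl⟩ : ∃ i', i = i' + 1 := ⟨i - 1, by omega⟩
      obtain ⟨j', rfl⟩ : ∃ j', j = j' + 1 := ⟨j - 1, by omega⟩
      exact Or.inr (Or.inl ⟨i', j', T2r i' j' (by omega) h, rfl, rfl⟩)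
    · have hij : i < j := h.1
      obtain ⟨i', rfl⟩ : ∃ i', i = w1.length + 2 + i' := ⟨i - (w1.length + 2), by omega⟩
      obtain ⟨j', rfl⟩ : ∃ j', j = w1.length + 2 + j' := ⟨j - (w1.length + 2), by omega⟩
      exact Or.inr (Or.inr ⟨i', j', T3r h1 i' j' h, by ring, by ring⟩)
  · rintro (⟨rfl, rfl⟩ | ⟨i', j', hc, rfl, rfl⟩ | ⟨i', j', hc, rfl, rfl⟩)
    · exact (T1 h1 h2 _).mpr rfl
    · exact T2f i' j' hc
    · have := T3f h1 i' j' hc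
      rw [show w1.length + 2 + i' = i' + (w1.length + 2) from by ring,
        show w1.length + 2 + j' = j' + (w1.length + 2) from by ring] at this
      exact this

lemma inj1 : Function.Injective (fun p : ℕ × ℕ => (p.1 + 1, p.2 + 1)) := by
  intro p q h
  simp only [Prod.mk.injEq] at h
  exact Prod.ext (by omega) (by omega)

lemma inj2 : Function.Injective (fun p : ℕ × ℕ => (p.1 + (w1.length + 2), p.2 + (w1.length + 2))) := by
  intro p q h
  simp only [Prod.mk.injEq] at h
  exact Prod.ext (by omega) (by omega)

lemma mem_image1_bounds {p : ℕ × ℕ}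
    (hp : p ∈ (chords w1).image fun q => (q.1 + 1, q.2 + 1)) :
    1 ≤ p.1 ∧ p.1 < p.2 ∧ p.2 ≤ w1.length := by
  simp only [Finset.mem_image, Prod.exists] at hp
  obtain ⟨a, b, hab, rfl⟩ := hp
  have h := mem_chords.mp hab
  have h1 : a < b := h.1
  have h2 : b < w1.length := h.2.1
  exact ⟨by omega, by simp; omega, by simp; omega⟩

lemma mem_image2_bounds {p : ℕ × ℕ}
    (hp : p ∈ (chords w2).image fun q => (q.1 + (w1.length + 2), q.2 + (w1.length + 2))) :
    w1.length + 2 ≤ p.1 ∧ w1.length + 3 ≤ p.2 := by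
  simp only [Finset.mem_image, Prod.exists] at hp
  obtain ⟨a, b, hab, rfl⟩ := hp
  have h1 : a < b := (mem_chords.mp hab).1
  exact ⟨by simp, by simp; omega⟩

lemma root_notmem :
    (0, w1.length + 1) ∉
      (((chords w1).image fun p => (p.1 + 1, p.2 + 1)) ∪
       ((chords w2).image fun p => (p.1 + (w1.length + 2), p.2 + (w1.length + 2)))) := by
  intro h
  rcases Finset.mem_union.mp h with h | h
  · have := (mem_image1_bounds h).1
    simp at this
  · have := (mem_image2_bounds h).1
    simp at this

lemma disj12 :
    Disjoint ((chords w1).image fun p : ℕ × ℕ => (p.1 + 1, p.2 + 1))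
      ((chords w2).image fun p : ℕ × ℕ => (p.1 + (w1.length + 2), p.2 + (w1.length + 2))) := by
  rw [Finset.disjoint_left]
  intro p hp1 hp2
  have b1 := (mem_image1_bounds hp1).2.2
  have b2 := (mem_image2_bounds hp2).2
  omega

lemma cl_root (h1 : IsDyckWord w1 n1) (h2 : IsDyckWord w2 n2) :
    chordLength (true :: (w1 ++ false :: w2)) (0, w1.length + 1) = (chords w1).card + 1 := by
  classical
  unfold chordLength
  rw [chords_decomp h1 h2, Finset.filter_insert]
  rw [if_pos (by simp)]
  rw [Finset.filter_union]
  rw [Finset.filter_true_of_mem (fun p hp => by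
    have := (mem_image1_bounds hp).2.2
    simp only
    omega)]
  rw [Finset.filter_false_of_mem (fun p hp => by
    have := (mem_image2_bounds hp).2
    simp only
    omega)]
  rw [Finset.union_empty,
    Finset.card_insert_of_notMem (fun h => by have := (mem_image1_bounds h).1; simp at this),
    Finset.card_image_of_injective _ inj1]

lemma cl_shift1 (h1 : IsDyckWord w1 n1) (h2 : IsDyckWord w2 n2) (c : ℕ × ℕ)
    (hc : c ∈ chords w1) :
    chordLength (true :: (w1 ++ false :: w2)) (c.1 + 1, c.2 + 1) = chordLength w1 c := by
  classical
  have hc2 : c.2 < w1.length := (mem_chords.mp hc).2.1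
  unfold chordLength
  rw [chords_decomp h1 h2, Finset.filter_insert]
  rw [if_neg (by simp)]
  rw [Finset.filter_union]
  have hfalse : ∀ p ∈ (chords w2).image
      (fun p : ℕ × ℕ => (p.1 + (w1.length + 2), p.2 + (w1.length + 2))),
      ¬((c.1 + 1, c.2 + 1).1 ≤ p.1 ∧ p.2 ≤ (c.1 + 1, c.2 + 1).2) := by
    intro p hp
    have := (mem_image2_bounds hp).2
    simp only
    omega
  rw [Finset.filter_false_of_mem hfalse]
  rw [Finset.union_empty, Finset.filter_image]
  rw [Finset.card_image_of_injective _ inj1]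
  congr 1
  apply Finset.filter_congr
  intro q _
  simp only
  constructor
  · rintro ⟨ha, hb⟩; exact ⟨by omega, by omega⟩
  · rintro ⟨ha, hb⟩; exact ⟨by omega, by omega⟩

lemma cl_shift2 (h1 : IsDyckWord w1 n1) (h2 : IsDyckWord w2 n2) (c : ℕ × ℕ)
    (hc : c ∈ chords w2) :
    chordLength (true :: (w1 ++ false :: w2)) (c.1 + (w1.length + 2), c.2 + (w1.length + 2)) =
      chordLength w2 c := by
  classical
  unfold chordLength
  rw [chords_decomp h1 h2, Finset.filter_insert]
  rw [if_neg (by simp)]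
  rw [Finset.filter_union]
  have hfalse : ∀ p ∈ (chords w1).image (fun p : ℕ × ℕ => (p.1 + 1, p.2 + 1)),
      ¬((c.1 + (w1.length + 2), c.2 + (w1.length + 2)).1 ≤ p.1 ∧
        p.2 ≤ (c.1 + (w1.length + 2), c.2 + (w1.length + 2)).2) := by
    intro p hp
    obtain ⟨b1, b2, b3⟩ := mem_image1_bounds hp
    simp only
    omega
  rw [Finset.filter_false_of_mem hfalse]
  rw [Finset.empty_union, Finset.filter_image]
  rw [Finset.card_image_of_injective _ inj2]
  congr 1
  apply Finset.filter_congr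
  intro q _
  simp only
  constructor
  · rintro ⟨ha, hb⟩; exact ⟨by omega, by omega⟩
  · rintro ⟨ha, hb⟩; exact ⟨by omega, by omega⟩

end Transfer
lemma card_chords : ∀ (n : ℕ) (w : List Bool), IsDyckWord w n → (chords w).card = n := by
  intro n
  induction n using Nat.strong_induction_on with
  | _ n ih =>
    intro w hw
    match n with
    | 0 =>
      have : w = [] := List.eq_nil_of_length_eq_zero (by have := hw.1; omega)
      subst this
      simp [chords]
    | n+1 =>
      obtain ⟨w1, w2, n1, n2, rfl, h1, h2, hn⟩ := DyckAux.exists_decomp hw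
      rw [chords_decomp h1 h2,
        Finset.card_insert_of_notMem root_notmem,
        Finset.card_union_of_disjoint disj12,
        Finset.card_image_of_injective _ inj1,
        Finset.card_image_of_injective _ inj2,
        ih n1 (by omega) w1 h1, ih n2 (by omega) w2 h2]
      omega

open DyckAux in
lemma main_aux : ∀ (n : ℕ) (w : List Bool), IsDyckWord w n →
    (∏ c ∈ chords w, qIntP (chordLength w c)) ∣ qFactP n := by
  intro n
  induction n using Nat.strong_induction_on with
  | _ n ih =>
    intro w hw
    match n with
    | 0 =>
      have : w = [] := List.eq_nil_of_length_eq_zero (by have := hw.1; omega)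
      subst this
      simp [chords, qFactP_zero]
    | n+1 =>
      obtain ⟨w1, w2, n1, n2, rfl, h1, h2, hn⟩ := DyckAux.exists_decomp hw
      rw [chords_decomp h1 h2,
        Finset.prod_insert root_notmem,
        Finset.prod_union disj12,
        Finset.prod_image (fun x _ y _ h => inj1 h),
        Finset.prod_image (fun x _ y _ h => inj2 h)]
      rw [cl_root h1 h2, card_chords n1 w1 h1]
      have e1 : (∏ c ∈ chords w1,
          qIntP (chordLength (true :: (w1 ++ false :: w2)) (c.1 + 1, c.2 + 1))) =
          ∏ c ∈ chords w1, qIntP (chordLength w1 c) :=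
        Finset.prod_congr rfl (fun c hc => by rw [cl_shift1 h1 h2 c hc])
      have e2 : (∏ c ∈ chords w2,
          qIntP (chordLength (true :: (w1 ++ false :: w2))
            (c.1 + (w1.length + 2), c.2 + (w1.length + 2)))) =
          ∏ c ∈ chords w2, qIntP (chordLength w2 c) :=
        Finset.prod_congr rfl (fun c hc => by rw [cl_shift2 h1 h2 c hc])
      rw [e1, e2]
      have d1 := ih n1 (by omega) w1 h1
      have d2 := ih n2 (by omega) w2 h2
      calc qIntP (n1+1) * ((∏ c ∈ chords w1, qIntP (chordLength w1 c)) *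
              (∏ c ∈ chords w2, qIntP (chordLength w2 c)))
          ∣ qIntP (n1+1) * (qFactP n1 * qFactP n2) :=
            mul_dvd_mul_left _ (mul_dvd_mul d1 d2)
        _ = qFactP (n1+1) * qFactP n2 := by rw [qFactP_succ]; ring
        _ ∣ qFactP ((n1+1) + n2) := qFact_mul_dvd _ _
        _ = qFactP (n+1) := by rw [show (n1+1) + n2 = n+1 from by omega]

end DyckAux2


/-- For any Dyck path `λ` of size `n`, the product `∏_{c ∈ Chord(λ)} [l(c)]`
divides `[n]!` in `ℤ[q]`. -/
theorem prod_qInt_chordLength_dvd_qFact (n : ℕ) (w : List Bool) (hw : IsDyckWord w n) :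
    (∏ c ∈ chords w, qIntP (chordLength w c)) ∣ qFactP n :=
  DyckAux2.main_aux n w hw
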